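/- arXiv:math/0209064 — 2 statements merged into one kernel-verified Lean document; each statement's English description precedes it below -/
import Mathlib

section
/- Let a < b be real numbers and let ν be the measure on [a,b] with density ρ(x) = 1/(π√((b-x)(x-a))). Then for every real x > b, the Cauchy transform C(x) = ∫_a^b ρ(t)/(x-t) dt satisfies C(x)^2 = 1/((x-a)(x-b)). -/
open MeasureTheory Real Set Filter

lemma arcsine_integrable (a b x : ℝ) (hab : a < b) (hx : b < x) :
    IntervalIntegrable
      (fun t => (1 / (Real.pi * Real.sqrt ((b - t) * (t - a)))) / (x - t)) volume a b := by
  have hba : (0:ℝ) < b - a := by linarith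
  have hxb : (0:ℝ) < x - b := by linarith
  rw [intervalIntegrable_iff_integrableOn_Ioo_of_le hab.le]
  -- integrable bound
  have h1 : IntervalIntegrable (fun t : ℝ => (t - a) ^ (-(1/2) : ℝ)) volume a b := by
    have h := (intervalIntegral.intervalIntegrable_rpow' (a := 0) (b := b - a) (r := -(1/2))
      (by norm_num)).comp_sub_right a
    simpa using h
  have h2 : IntervalIntegrable (fun t : ℝ => (b - t) ^ (-(1/2) : ℝ)) volume a b := by
    have h := (intervalIntegral.intervalIntegrable_rpow' (a := 0) (b := b - a) (r := -(1/2))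
      (by norm_num)).comp_sub_left b
    simpa using h.symm
  have hbound : IntegrableOn
      (fun t : ℝ => (1 / (Real.pi * Real.sqrt (b - a) * (x - b))) *
        ((t - a) ^ (-(1/2) : ℝ) + (b - t) ^ (-(1/2) : ℝ))) (Set.Ioo a b) volume := by
    have := ((h1.add h2).const_mul (1 / (Real.pi * Real.sqrt (b - a) * (x - b))))
    rw [intervalIntegrable_iff_integrableOn_Ioo_of_le hab.le] at this
    exact this
  apply Integrable.mono' hbound
  · -- measurability
    apply ContinuousOn.aestronglyMeasurable _ measurableSet_Ioo
    apply ContinuousOn.div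
    · apply ContinuousOn.div continuousOn_const
      · exact (continuous_const.mul (Real.continuous_sqrt.comp (by continuity))).continuousOn
      · intro t ht
        exact ne_of_gt (mul_pos Real.pi_pos
          (Real.sqrt_pos.mpr (mul_pos (by linarith [ht.2]) (by linarith [ht.1]))))
    · exact (continuous_const.sub continuous_id).continuousOn
    · intro t ht
      exact ne_of_gt (by linarith [ht.2] : (0:ℝ) < x - t)
  · -- pointwise bound
    filter_upwards [ae_restrict_mem measurableSet_Ioo] with t ht
    obtain ⟨h1t, h2t⟩ := ht
    have hta : (0:ℝ) < t - a := by linarith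
    have hbt : (0:ℝ) < b - t := by linarith
    have hxt : (0:ℝ) < x - t := by linarith
    set sa := Real.sqrt (t - a) with hsa
    set sb := Real.sqrt (b - t) with hsb
    have hsa0 : 0 < sa := Real.sqrt_pos.mpr hta
    have hsb0 : 0 < sb := Real.sqrt_pos.mpr hbt
    have hsq : Real.sqrt ((b - t) * (t - a)) = sb * sa := Real.sqrt_mul hbt.le _
    have hra : (t - a) ^ (-(1/2) : ℝ) = 1 / sa := by
      rw [Real.rpow_neg hta.le, hsa, Real.sqrt_eq_rpow]
      exact (one_div _).symm
    have hrb : (b - t) ^ (-(1/2) : ℝ) = 1 / sb := by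
      rw [Real.rpow_neg hbt.le, hsb, Real.sqrt_eq_rpow]
      exact (one_div _).symm
    have hsum : Real.sqrt (b - a) ≤ sa + sb := by
      have h1 : sa ^ 2 = t - a := Real.sq_sqrt hta.le
      have h2 : sb ^ 2 = b - t := Real.sq_sqrt hbt.le
      have : b - a ≤ (sa + sb) ^ 2 := by nlinarith [mul_pos hsa0 hsb0]
      calc Real.sqrt (b - a) ≤ Real.sqrt ((sa + sb) ^ 2) := Real.sqrt_le_sqrt this
        _ = sa + sb := Real.sqrt_sq (by positivity)
    have hsba : 0 < Real.sqrt (b - a) := Real.sqrt_pos.mpr hba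
    rw [hsq, hra, hrb]
    have hval : (1 / (Real.pi * (sb * sa))) / (x - t) =
        1 / (Real.pi * (sb * sa) * (x - t)) := by
      rw [div_div]
    rw [Real.norm_eq_abs, abs_of_nonneg (by positivity), hval]
    have hrhs : (1 / (Real.pi * Real.sqrt (b - a) * (x - b))) * (1 / sa + 1 / sb) =
        (sa + sb) / (Real.pi * Real.sqrt (b - a) * (x - b) * (sa * sb)) := by
      field_simp
      ring
    rw [hrhs, div_le_div_iff₀ (by positivity) (by positivity)]
    have hkey : Real.sqrt (b - a) * (x - b) ≤ (sa + sb) * (x - t) :=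
      mul_le_mul hsum (by linarith) hxb.le (by positivity)
    have h5 := mul_le_mul_of_nonneg_left hkey
      (by positivity : (0:ℝ) ≤ Real.pi * (sa * sb))
    calc 1 * (Real.pi * Real.sqrt (b - a) * (x - b) * (sa * sb))
        = Real.pi * (sa * sb) * (Real.sqrt (b - a) * (x - b)) := by ring
      _ ≤ Real.pi * (sa * sb) * ((sa + sb) * (x - t)) := h5
      _ = (sa + sb) * (Real.pi * (sb * sa) * (x - t)) := by ring

theorem arcsine_cauchy_transform_sq (a b : ℝ) (hab : a < b) (x : ℝ) (hx : b < x) :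
    (∫ t in Set.Ioo a b, (1 / (Real.pi * Real.sqrt ((b - t) * (t - a)))) / (x - t)) ^ 2
      = 1 / ((x - a) * (x - b)) := by
  have hxa : (0:ℝ) < x - a := by linarith
  have hxb : (0:ℝ) < x - b := by linarith
  have hba : (0:ℝ) < b - a := by linarith
  set p := Real.sqrt (x - a) with hp
  set q := Real.sqrt (x - b) with hq
  have hp0 : 0 < p := Real.sqrt_pos.mpr hxa
  have hq0 : 0 < q := Real.sqrt_pos.mpr hxb
  have hp2 : p ^ 2 = x - a := Real.sq_sqrt hxa.le
  have hq2 : q ^ 2 = x - b := Real.sq_sqrt hxb.le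
  set k := Real.sqrt ((x - b) / (x - a)) with hk
  have hkval : k = q / p := Real.sqrt_div hxb.le _
  have hk0 : 0 < k := by rw [hkval]; positivity
  set F : ℝ → ℝ := fun t =>
    (2 / (Real.pi * (p * q))) * Real.arctan (k * Real.sqrt ((t - a) / (b - t))) with hF
  have hderiv : ∀ t ∈ Set.Ioo a b, HasDerivAt F
      ((1 / (Real.pi * Real.sqrt ((b - t) * (t - a)))) / (x - t)) t := by
    intro t ht
    obtain ⟨h1t, h2t⟩ := ht
    have hta : (0:ℝ) < t - a := by linarith
    have hbt : (0:ℝ) < b - t := by linarith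
    have hxt : (0:ℝ) < x - t := by linarith
    have hg : HasDerivAt (fun t : ℝ => (t - a) / (b - t)) ((b - a) / (b - t) ^ 2) t := by
      have h := ((hasDerivAt_id t).sub_const a).div
        ((hasDerivAt_const t b).sub (hasDerivAt_id t)) (by linarith : b - t ≠ 0)
      refine h.congr_deriv ?_
      simp only [Pi.sub_apply, id]; ring
    have hgt : (0:ℝ) < (t - a) / (b - t) := div_pos hta hbt
    have hsq : HasDerivAt (fun t : ℝ => Real.sqrt ((t - a) / (b - t)))
        (((b - a) / (b - t) ^ 2) / (2 * Real.sqrt ((t - a) / (b - t)))) t :=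
      hg.sqrt (ne_of_gt hgt)
    have hu := hsq.const_mul k
    have harc := hu.arctan
    have hfin := harc.const_mul (2 / (Real.pi * (p * q)))
    refine hfin.congr_deriv (Eq.symm ?_)
    set sa := Real.sqrt (t - a) with hsa
    set sb := Real.sqrt (b - t) with hsb
    have hsa0 : 0 < sa := Real.sqrt_pos.mpr hta
    have hsb0 : 0 < sb := Real.sqrt_pos.mpr hbt
    have hsa2 : sa ^ 2 = t - a := Real.sq_sqrt hta.le
    have hsb2 : sb ^ 2 = b - t := Real.sq_sqrt hbt.le
    have hsdiv : Real.sqrt ((t - a) / (b - t)) = sa / sb := Real.sqrt_div hta.le _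
    have hsmul : Real.sqrt ((b - t) * (t - a)) = sb * sa := Real.sqrt_mul hbt.le _
    rw [hsmul, hsdiv, hkval]
    have hxt' : x - t = q ^ 2 + sb ^ 2 := by rw [hq2, hsb2]; ring
    have hba' : b - a = sa ^ 2 + sb ^ 2 := by rw [hsa2, hsb2]; ring
    have hbt' : b - t = sb ^ 2 := hsb2.symm
    rw [hxt', hba', hbt']
    have hpi := Real.pi_pos
    have hp2' : p ^ 2 = sa ^ 2 + sb ^ 2 + q ^ 2 := by
      rw [hp2, hsa2, hsb2, hq2]; ring
    field_simp
    linear_combination sb ^ 2 * hp2'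
  have hint := arcsine_integrable a b x hab hx
  have hFa : Tendsto F (nhdsWithin a (Set.Ioi a)) (nhds 0) := by
    have hca : ContinuousAt F a := by
      have hdiv : ContinuousAt (fun t : ℝ => (t - a) / (b - t)) a :=
        ContinuousAt.div (by fun_prop) (by fun_prop) (sub_ne_zero.mpr hab.ne')
      exact continuousAt_const.mul (Real.continuousAt_arctan.comp
        (continuousAt_const.mul (Real.continuous_sqrt.continuousAt.comp hdiv)))
    have hFa0 : F a = 0 := by
      simp [hF, sub_self, zero_div]
    rw [← hFa0]
    exact hca.continuousWithinAt
  have hFb : Tendsto F (nhdsWithin b (Set.Iio b)) (nhds (1 / (p * q))) := by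
    have h1 : Tendsto (fun t : ℝ => (t - a) / (b - t)) (nhdsWithin b (Set.Iio b)) atTop := by
      have hnum : Tendsto (fun t : ℝ => t - a) (nhdsWithin b (Set.Iio b)) (nhds (b - a)) :=
        ((continuous_id.sub continuous_const).tendsto b).mono_left nhdsWithin_le_nhds
      have hden : Tendsto (fun t : ℝ => b - t) (nhdsWithin b (Set.Iio b))
          (nhdsWithin 0 (Set.Ioi 0)) := by
        apply tendsto_nhdsWithin_of_tendsto_nhds_of_eventually_within
        · have : Tendsto (fun t : ℝ => b - t) (nhds b) (nhds (b - b)) :=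
            (continuous_const.sub continuous_id).tendsto b
          simpa using this.mono_left nhdsWithin_le_nhds
        · filter_upwards [self_mem_nhdsWithin] with t ht
          simp only [Set.mem_Iio] at ht
          exact Set.mem_Ioi.mpr (by linarith)
      have hinv : Tendsto (fun t : ℝ => (b - t)⁻¹) (nhdsWithin b (Set.Iio b)) atTop :=
        tendsto_inv_nhdsGT_zero.comp hden
      exact (hnum.pos_mul_atTop hba hinv).congr (fun t => (div_eq_mul_inv _ _).symm)
    have hsqrtTop : Tendsto Real.sqrt atTop atTop := by
      apply Filter.tendsto_atTop_atTop.mpr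
      intro C
      refine ⟨(max C 0) ^ 2, fun y hy => ?_⟩
      calc C ≤ max C 0 := le_max_left _ _
        _ = Real.sqrt ((max C 0) ^ 2) := (Real.sqrt_sq (le_max_right _ _)).symm
        _ ≤ Real.sqrt y := Real.sqrt_le_sqrt hy
    have h2 : Tendsto (fun t : ℝ => k * Real.sqrt ((t - a) / (b - t)))
        (nhdsWithin b (Set.Iio b)) atTop :=
      (hsqrtTop.comp h1).const_mul_atTop hk0
    have h3 : Tendsto (fun t : ℝ => Real.arctan (k * Real.sqrt ((t - a) / (b - t))))
        (nhdsWithin b (Set.Iio b)) (nhds (Real.pi / 2)) :=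
      (Real.tendsto_arctan_atTop.comp h2).mono_right nhdsWithin_le_nhds
    have h4 := h3.const_mul (2 / (Real.pi * (p * q)))
    have : 2 / (Real.pi * (p * q)) * (Real.pi / 2) = 1 / (p * q) := by
      have hpi := Real.pi_ne_zero
      field_simp
    rw [← this]
    exact h4
  have hFTC := intervalIntegral.integral_eq_sub_of_hasDerivAt_of_tendsto hab hderiv hint hFa hFb
  have hIoo : (∫ t in Set.Ioo a b, (1 / (Real.pi * Real.sqrt ((b - t) * (t - a)))) / (x - t))
      = ∫ t in a..b, (1 / (Real.pi * Real.sqrt ((b - t) * (t - a)))) / (x - t) := by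
    rw [intervalIntegral.integral_of_le hab.le, MeasureTheory.integral_Ioc_eq_integral_Ioo]
  rw [hIoo, hFTC]
  rw [sub_zero, div_pow, one_pow, mul_pow, hp2, hq2]
end

section
/- Let a < b and let ν be the arcsine measure on [a,b] with density 1/(π√((b-x)(x-a))). Then for real x > b, the Cauchy transform equals C(x) = 1/√((x-a)(x-b)), and in particular C(x) > 0 and C(x) → 0 as x → ∞. -/
open MeasureTheory Filter Set

lemma arcsine_key (a b x : ℝ) (hab : a < b) (hx : b < x) :
    ∫ t in Set.Ioo a b, 1 / (Real.sqrt ((b - t) * (t - a)) * (x - t))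
      = Real.pi / Real.sqrt ((x - a) * (x - b)) := by
  have hxa : 0 < x - a := by linarith
  have hxb : 0 < x - b := by linarith
  set S := Real.sqrt ((x - a) * (x - b)) with hSdef
  have hSsq : S ^ 2 = (x - a) * (x - b) := Real.sq_sqrt (by positivity)
  have hS : 0 < S := Real.sqrt_pos.2 (by positivity)
  set r : ℝ := (b - a) / 2 with hrdef
  set c : ℝ := (a + b) / 2 with hcdef
  have hr : 0 < r := by rw [hrdef]; linarith
  set h : ℝ → ℝ := fun t => (r ^ 2 - (x - c) * (t - c)) / (r * (x - t)) with hhdef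
  set F : ℝ → ℝ := fun t => -Real.arcsin (h t) / S with hFdef
  set g : ℝ → ℝ := fun t => 1 / (Real.sqrt ((b - t) * (t - a)) * (x - t)) with hgdef
  have hid : ∀ t : ℝ, (r * (x - t)) ^ 2 - (r ^ 2 - (x - c) * (t - c)) ^ 2
      = ((x - a) * (x - b)) * ((b - t) * (t - a)) := by
    intro t; rw [hrdef, hcdef]; ring
  -- derivative on the open interval
  have hderiv : ∀ t ∈ Ioo a b, HasDerivAt F (g t) t := by
    intro t ht
    have hta : 0 < t - a := by linarith [ht.1]
    have hbt : 0 < b - t := by linarith [ht.2]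
    have hxt : 0 < x - t := by linarith [ht.2]
    have hu : 0 < (b - t) * (t - a) := by positivity
    have hsu : 0 < Real.sqrt ((b - t) * (t - a)) := Real.sqrt_pos.2 hu
    have hD : 0 < r * (x - t) := by positivity
    have hsq : (r ^ 2 - (x - c) * (t - c)) ^ 2 < (r * (x - t)) ^ 2 := by
      nlinarith [hid t, mul_pos (mul_pos hxa hxb) hu]
    have hlt : h t < 1 := by
      rw [hhdef]; simp only
      rw [div_lt_one hD]; nlinarith
    have hgt : -1 < h t := by
      rw [hhdef]; simp only
      rw [lt_div_iff₀ hD]; nlinarith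
    have hne1 : h t ≠ -1 := ne_of_gt hgt
    have hne2 : h t ≠ 1 := ne_of_lt hlt
    -- derivative of h
    have hdh : HasDerivAt h (-((x - a) * (x - b)) / (r * (x - t) ^ 2)) t := by
      have h1 : HasDerivAt (fun y : ℝ => r ^ 2 - (x - c) * (y - c)) (-(x - c)) t := by
        simpa using (((hasDerivAt_id t).sub_const c).const_mul (x - c)).const_sub (r ^ 2)
      have h2 : HasDerivAt (fun y : ℝ => r * (x - y)) (r * (-1)) t :=
        ((hasDerivAt_id t).const_sub x).const_mul r
      have := h1.div h2 (ne_of_gt hD)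
      refine this.congr_deriv ?_
      symm
      have hrne : r ≠ 0 := hr.ne'
      have hxtne : x - t ≠ 0 := hxt.ne'
      field_simp
      rw [hrdef, hcdef]
      ring
    have harc := (Real.hasDerivAt_arcsin hne1 hne2).comp t hdh
    have hDne : r * (x - t) ≠ 0 := hD.ne'
    have e2 : (S * Real.sqrt ((b - t) * (t - a)) / (r * (x - t))) ^ 2
        = ((x - a) * (x - b)) * ((b - t) * (t - a)) / (r * (x - t)) ^ 2 := by
      rw [div_pow, mul_pow, hSsq, Real.sq_sqrt hu.le]
    have e1 : 1 - h t ^ 2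
        = ((x - a) * (x - b)) * ((b - t) * (t - a)) / (r * (x - t)) ^ 2 := by
      rw [hhdef]
      simp only
      rw [div_pow, ← hid t]
      field_simp
    have hsqrt : Real.sqrt (1 - h t ^ 2)
        = S * Real.sqrt ((b - t) * (t - a)) / (r * (x - t)) := by
      rw [e1, ← e2, Real.sqrt_sq (by positivity)]
    have := (harc.neg).div_const S
    refine this.congr_deriv ?_
    symm
    rw [hgdef, hsqrt]
    simp only
    rw [← hSsq]
    have hrne : r ≠ 0 := hr.ne'
    have hxtne : x - t ≠ 0 := hxt.ne'
    field_simp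
  -- continuity of F on the closed interval
  have hFcont : ContinuousOn F (Icc a b) := by
    apply ContinuousOn.div_const
    apply ContinuousOn.neg
    apply Real.continuous_arcsin.comp_continuousOn
    apply ContinuousOn.div
    · fun_prop
    · fun_prop
    · intro t ht
      have : 0 < x - t := by linarith [ht.2]
      positivity
  -- nonnegativity of g
  have hgpos : ∀ t ∈ Ioo a b, 0 ≤ g t := by
    intro t ht
    have h1 : 0 < x - t := by linarith [ht.2]
    have h2 : 0 ≤ Real.sqrt ((b - t) * (t - a)) := Real.sqrt_nonneg _
    rw [hgdef]
    positivity
  -- integrability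
  have hint : IntervalIntegrable g volume a b := by
    apply intervalIntegral.intervalIntegrable_deriv_of_nonneg (g := F)
    · rwa [uIcc_of_le hab.le]
    · rwa [min_eq_left hab.le, max_eq_right hab.le]
    · rwa [min_eq_left hab.le, max_eq_right hab.le]
  -- endpoint values
  have hha : h a = 1 := by
    rw [hhdef]; simp only
    rw [div_eq_one_iff_eq (by positivity), hrdef, hcdef]; ring
  have hhb : h b = -1 := by
    rw [hhdef]; simp only
    rw [div_eq_iff (by positivity : (0:ℝ) < r * (x - b)).ne', hrdef, hcdef]; ring
  have hFab : F b - F a = Real.pi / S := by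
    rw [hFdef]; simp only [hha, hhb, Real.arcsin_one, Real.arcsin_neg_one]
    field_simp
    ring
  calc ∫ t in Ioo a b, g t = ∫ t in Ioc a b, g t := (integral_Ioc_eq_integral_Ioo).symm
    _ = ∫ t in a..b, g t := (intervalIntegral.integral_of_le hab.le).symm
    _ = F b - F a := intervalIntegral.integral_eq_sub_of_hasDerivAt_of_le hab.le hFcont hderiv hint
    _ = Real.pi / S := hFab


open MeasureTheory Filter

theorem arcsine_cauchy_transform (a b : ℝ) (hab : a < b) :
    (∀ x : ℝ, b < x →
        (∫ t in Set.Ioo a b, (1 / (Real.pi * Real.sqrt ((b - t) * (t - a)))) / (x - t))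
            = 1 / Real.sqrt ((x - a) * (x - b)) ∧
          0 < ∫ t in Set.Ioo a b, (1 / (Real.pi * Real.sqrt ((b - t) * (t - a)))) / (x - t)) ∧
      Tendsto
        (fun x : ℝ => ∫ t in Set.Ioo a b, (1 / (Real.pi * Real.sqrt ((b - t) * (t - a)))) / (x - t))
        atTop (nhds 0) := by
  have hform : ∀ x : ℝ, b < x →
      (∫ t in Set.Ioo a b, (1 / (Real.pi * Real.sqrt ((b - t) * (t - a)))) / (x - t))
        = 1 / Real.sqrt ((x - a) * (x - b)) := by
    intro x hx
    have heq : ∀ t : ℝ, (1 / (Real.pi * Real.sqrt ((b - t) * (t - a)))) / (x - t)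
        = Real.pi⁻¹ * (1 / (Real.sqrt ((b - t) * (t - a)) * (x - t))) := by
      intro t
      rw [div_div, one_div, one_div, mul_assoc, mul_inv, mul_inv]
    simp only [heq]
    rw [MeasureTheory.integral_const_mul, arcsine_key a b x hab hx]
    have hπ : Real.pi ≠ 0 := Real.pi_ne_zero
    field_simp
  constructor
  · intro x hx
    refine ⟨hform x hx, ?_⟩
    rw [hform x hx]
    have hxa : 0 < x - a := by linarith
    have hxb : 0 < x - b := by linarith
    have hS : 0 < Real.sqrt ((x - a) * (x - b)) := Real.sqrt_pos.2 (by positivity)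
    positivity
  · have hev : (fun x : ℝ =>
        ∫ t in Set.Ioo a b, (1 / (Real.pi * Real.sqrt ((b - t) * (t - a)))) / (x - t))
        =ᶠ[atTop] fun x : ℝ => 1 / Real.sqrt ((x - a) * (x - b)) := by
      filter_upwards [eventually_gt_atTop b] with x hx using hform x hx
    have hsqrtTop : Tendsto Real.sqrt atTop atTop := by
      apply tendsto_atTop_atTop.2
      intro y
      refine ⟨y ^ 2, fun z hz => ?_⟩
      calc y ≤ |y| := le_abs_self y
        _ = Real.sqrt (y ^ 2) := (Real.sqrt_sq_eq_abs y).symm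
        _ ≤ Real.sqrt z := Real.sqrt_le_sqrt hz
    have h1 : Tendsto (fun x : ℝ => (x - a) * (x - b)) atTop atTop := by
      apply Tendsto.atTop_mul_atTop₀
      · exact tendsto_atTop_add_const_right atTop (-a) tendsto_id
      · exact tendsto_atTop_add_const_right atTop (-b) tendsto_id
    have h2 : Tendsto (fun x : ℝ => Real.sqrt ((x - a) * (x - b))) atTop atTop :=
      hsqrtTop.comp h1
    have h3 : Tendsto (fun x : ℝ => 1 / Real.sqrt ((x - a) * (x - b))) atTop (nhds 0) := by
      simpa [one_div, Pi.inv_def] using h2.inv_tendsto_atTop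
    exact Tendsto.congr' hev.symm h3
end
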